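/- Let [M] be the set of 2×2 real matrices M with m₁₁ ∈ [4, 5], m₁₂ ∈ [−1, 2], m₂₁ ∈ [−1, 2], m₂₂ ∈ [2, 3], and let [q] be the set of q ∈ ℝ² with q₁ ∈ [−2, −1], q₂ ∈ [−1, 1]. Let z̲ = (5/7, 6/7), which solves LCP(M̲, q̲) for M̲ with rows (4, −1), (−1, 2) and q̲ = (−2, −1). Then every vector z solving LCP(M, q) for some M ∈ [M] and q ∈ [q] satisfies z ≤ z̲ entrywise; and every vector z ≠ z̲ solving LCP(M, q) for some symmetric M ∈ [M] and q ∈ [q] satisfies z < z̲ entrywise. -/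
import Mathlib


/-- `z` solves the linear complementarity problem LCP(M, q). -/
def SolvesLCP {n : ℕ} (M : Matrix (Fin n) (Fin n) ℝ) (q z : Fin n → ℝ) : Prop :=
  (∀ i, 0 ≤ q i + M.mulVec z i) ∧ (∀ i, 0 ≤ z i) ∧ (∑ i, (q i + M.mulVec z i) * z i) = 0

/-- Membership of a 2×2 matrix in the interval matrix of Example 6.1.2. -/
def MemIntervalM (M : Matrix (Fin 2) (Fin 2) ℝ) : Prop :=
  M 0 0 ∈ Set.Icc (4 : ℝ) 5 ∧ M 0 1 ∈ Set.Icc (-1 : ℝ) 2 ∧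
  M 1 0 ∈ Set.Icc (-1 : ℝ) 2 ∧ M 1 1 ∈ Set.Icc (2 : ℝ) 3

/-- Membership of a vector in the interval vector of Example 6.1.2. -/
def MemIntervalQ (q : Fin 2 → ℝ) : Prop :=
  q 0 ∈ Set.Icc (-2 : ℝ) (-1) ∧ q 1 ∈ Set.Icc (-1 : ℝ) 1

lemma key (M : Matrix (Fin 2) (Fin 2) ℝ) (q z : Fin 2 → ℝ)
    (hM : MemIntervalM M) (hq : MemIntervalQ q) (hz : SolvesLCP M q z) :
    z 0 ≤ 5/7 ∧ z 1 ≤ 6/7 ∧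
      ((z 0 = 5/7 ∨ z 1 = 6/7) → (z 0 = 5/7 ∧ z 1 = 6/7)) := by
  obtain ⟨hw, hzn, hsum⟩ := hz
  obtain ⟨⟨hM1, _⟩, ⟨hM2, _⟩, ⟨hM3, _⟩, ⟨hM4, _⟩⟩ := hM
  obtain ⟨⟨hq1, _⟩, ⟨hq2, _⟩⟩ := hq
  have m0 : M.mulVec z 0 = M 0 0 * z 0 + M 0 1 * z 1 := by
    simp [Matrix.mulVec, dotProduct, Fin.sum_univ_two]
  have m1 : M.mulVec z 1 = M 1 0 * z 0 + M 1 1 * z 1 := by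
    simp [Matrix.mulVec, dotProduct, Fin.sum_univ_two]
  rw [Fin.sum_univ_two] at hsum
  have e0 : (q 0 + M.mulVec z 0) * z 0 = 0 := by
    nlinarith [mul_nonneg (hw 0) (hzn 0), mul_nonneg (hw 1) (hzn 1)]
  have e1 : (q 1 + M.mulVec z 1) * z 1 = 0 := by
    nlinarith [mul_nonneg (hw 0) (hzn 0), mul_nonneg (hw 1) (hzn 1)]
  have A : z 0 = 0 ∨ 4 * z 0 ≤ 2 + z 1 := by
    rcases mul_eq_zero.1 e0 with h | h
    · right
      rw [m0] at h
      nlinarith [mul_nonneg (sub_nonneg.2 hM1) (hzn 0),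
        mul_nonneg (by linarith : (0:ℝ) ≤ M 0 1 + 1) (hzn 1)]
    · left; exact h
  have B : z 1 = 0 ∨ 2 * z 1 ≤ 1 + z 0 := by
    rcases mul_eq_zero.1 e1 with h | h
    · right
      rw [m1] at h
      nlinarith [mul_nonneg (sub_nonneg.2 hM4) (hzn 1),
        mul_nonneg (by linarith : (0:ℝ) ≤ M 1 0 + 1) (hzn 0)]
    · left; exact h
  have hz0 := hzn 0
  have hz1 := hzn 1
  rcases A with hA | hA <;> rcases B with hB | hB <;>
    refine ⟨by linarith, by linarith, fun h => ?_⟩ <;>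
    rcases h with h | h <;> constructor <;> linarith

lemma eq_iff (z : Fin 2 → ℝ) : z = ![5/7, 6/7] ↔ z 0 = 5/7 ∧ z 1 = 6/7 := by
  constructor
  · intro h; subst h; simp
  · rintro ⟨h0, h1⟩; funext i; fin_cases i <;> simpa

theorem stmt17 :
    SolvesLCP !![(4 : ℝ), -1; -1, 2] ![-2, -1] ![5/7, 6/7] ∧
    (∀ (M : Matrix (Fin 2) (Fin 2) ℝ) (q z : Fin 2 → ℝ),
      MemIntervalM M → MemIntervalQ q → SolvesLCP M q z →
      ∀ i, z i ≤ (![5/7, 6/7] : Fin 2 → ℝ) i) ∧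
    (∀ (M : Matrix (Fin 2) (Fin 2) ℝ) (q z : Fin 2 → ℝ),
      MemIntervalM M → M.IsSymm → MemIntervalQ q → SolvesLCP M q z →
      z ≠ ![5/7, 6/7] → ∀ i, z i < (![5/7, 6/7] : Fin 2 → ℝ) i) := by
  refine ⟨⟨?_, ?_, ?_⟩, ?_, ?_⟩
  · intro i; fin_cases i <;>
      simp [Matrix.mulVec, dotProduct, Fin.sum_univ_two] <;> norm_num
  · intro i; fin_cases i <;> norm_num
  · simp [Matrix.mulVec, dotProduct, Fin.sum_univ_two]; norm_num
  · intro M q z hM hq hz i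
    obtain ⟨h0, h1, _⟩ := key M q z hM hq hz
    fin_cases i <;> simpa
  · intro M q z hM _ hq hz hne i
    obtain ⟨h0, h1, h2⟩ := key M q z hM hq hz
    have hne' : ¬(z 0 = 5/7 ∧ z 1 = 6/7) := fun h => hne ((eq_iff z).2 h)
    have s0 : z 0 < 5/7 := lt_of_le_of_ne h0 (fun h => hne' (h2 (Or.inl h)))
    have s1 : z 1 < 6/7 := lt_of_le_of_ne h1 (fun h => hne' (h2 (Or.inr h)))
    fin_cases i <;> simpa
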